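/- arXiv:1706.01865 — 2 statements merged into one kernel-verified Lean document; each statement's English description precedes it below -/
import Mathlib

section
/- If ρ : ℝ × D → ℝ is jointly convex in (r,θ), nonnegative, and for each θ ∈ D the integral n_c(θ) = ∫_ℝ exp(-ρ(r;θ)) dr is finite, then θ ↦ log n_c(θ) is concave on the convex set D. -/
open MeasureTheory
open Set ENNReal


lemma ioo_sInf_sSup_subset {A : Set ℝ} (hA : Convex ℝ A) (hne : A.Nonempty) :
    Ioo (sInf A) (sSup A) ⊆ A := by
  intro x hx
  obtain ⟨p, hp, hpx⟩ := exists_lt_of_csInf_lt hne hx.1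
  obtain ⟨q, hq, hxq⟩ := exists_lt_of_lt_csSup hne hx.2
  exact hA.ordConnected.out hp hq ⟨hpx.le, hxq.le⟩

lemma bdd_of_convex_finite {A : Set ℝ} (hA : Convex ℝ A) (hne : A.Nonempty)
    (hfin : volume A ≠ ⊤) : BddBelow A ∧ BddAbove A := by
  obtain ⟨x₀, hx₀⟩ := hne
  constructor
  · by_contra hb
    rw [not_bddBelow_iff] at hb
    have hsub : Iic x₀ ⊆ A := by
      intro x hx
      obtain ⟨y, hy, hyx⟩ := hb x
      exact hA.ordConnected.out hy hx₀ ⟨hyx.le, hx⟩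
    have : (⊤ : ℝ≥0∞) ≤ volume A := by
      rw [← Real.volume_Iic (a := x₀)]; exact measure_mono hsub
    exact hfin (top_le_iff.mp this)
  · by_contra hb
    rw [not_bddAbove_iff] at hb
    have hsub : Ici x₀ ⊆ A := by
      intro x hx
      obtain ⟨y, hy, hyx⟩ := hb x
      exact hA.ordConnected.out hx₀ hy ⟨hx, hyx.le⟩
    have : (⊤ : ℝ≥0∞) ≤ volume A := by
      rw [← Real.volume_Ici (a := x₀)]; exact measure_mono hsub
    exact hfin (top_le_iff.mp this)

lemma volume_convex_eq {A : Set ℝ} (hA : Convex ℝ A) (hne : A.Nonempty)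
    (hbb : BddBelow A) (hba : BddAbove A) :
    volume A = ENNReal.ofReal (sSup A - sInf A) := by
  apply le_antisymm
  · calc volume A ≤ volume (Icc (sInf A) (sSup A)) :=
        measure_mono fun x hx => ⟨csInf_le hbb hx, le_csSup hba hx⟩
      _ = ENNReal.ofReal (sSup A - sInf A) := Real.volume_Icc
  · calc ENNReal.ofReal (sSup A - sInf A) = volume (Ioo (sInf A) (sSup A)) :=
        Real.volume_Ioo.symm
      _ ≤ volume A := measure_mono (ioo_sInf_sSup_subset hA hne)

lemma convex_measure_superadd {A B C : Set ℝ} {a b : ℝ} (ha : 0 ≤ a) (hb : 0 ≤ b)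
    (hA : Convex ℝ A) (hB : Convex ℝ B) (hAne : A.Nonempty) (hBne : B.Nonempty)
    (hAfin : volume A ≠ ⊤) (hBfin : volume B ≠ ⊤)
    (hC : ∀ x ∈ A, ∀ y ∈ B, a * x + b * y ∈ C) :
    ENNReal.ofReal a * volume A + ENNReal.ofReal b * volume B ≤ volume C := by
  obtain ⟨hAbb, hAba⟩ := bdd_of_convex_finite hA hAne hAfin
  obtain ⟨hBbb, hBba⟩ := bdd_of_convex_finite hB hBne hBfin
  set α₁ := sInf A; set α₂ := sSup A; set β₁ := sInf B; set β₂ := sSup B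
  have hα : α₁ ≤ α₂ := csInf_le_csSup hAne hAbb hAba
  have hβ : β₁ ≤ β₂ := csInf_le_csSup hBne hBbb hBba
  have hsub : Ioo (a * α₁ + b * β₁) (a * α₂ + b * β₂) ⊆ C := by
    intro z hz
    have hd : 0 < (a * α₂ + b * β₂) - (a * α₁ + b * β₁) := sub_pos.mpr (hz.1.trans hz.2)
    set d := (a * α₂ + b * β₂) - (a * α₁ + b * β₁) with hd_def
    set t := (z - (a * α₁ + b * β₁)) / d with ht_def
    have ht0 : 0 < t := div_pos (sub_pos.mpr hz.1) hd
    have ht1 : t < 1 := (div_lt_one hd).mpr (by simp only [hd_def]; linarith [hz.2])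
    have hmem : ∀ (S : Set ℝ), Convex ℝ S → S.Nonempty → BddBelow S → BddAbove S →
        sInf S + t * (sSup S - sInf S) ∈ S := by
      intro S hS hSne hSbb hSba
      rcases eq_or_lt_of_le (csInf_le_csSup hSne hSbb hSba) with he | hlt
      · obtain ⟨w, hw⟩ := hSne
        have hw1 : w = sInf S := le_antisymm (by rw [he]; exact le_csSup hSba hw) (csInf_le hSbb hw)
        rw [← he]; simpa [hw1] using hw
      · apply ioo_sInf_sSup_subset hS hSne
        constructor
        · nlinarith
        · nlinarith
    have hx := hmem A hA hAne hAbb hAba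
    have hy := hmem B hB hBne hBbb hBba
    have hz' : a * (α₁ + t * (α₂ - α₁)) + b * (β₁ + t * (β₂ - β₁)) = z := by
      have htd : t * d = z - (a * α₁ + b * β₁) := by
        rw [ht_def]; field_simp
      rw [hd_def] at htd; nlinarith [htd]
    have := hC _ hx _ hy
    rwa [hz'] at this
  calc ENNReal.ofReal a * volume A + ENNReal.ofReal b * volume B
      = ENNReal.ofReal (a * (α₂ - α₁)) + ENNReal.ofReal (b * (β₂ - β₁)) := by
        rw [volume_convex_eq hA hAne hAbb hAba, volume_convex_eq hB hBne hBbb hBba,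
          ENNReal.ofReal_mul ha, ENNReal.ofReal_mul hb]
    _ = ENNReal.ofReal (a * (α₂ - α₁) + b * (β₂ - β₁)) :=
        (ENNReal.ofReal_add (by nlinarith) (by nlinarith)).symm
    _ = volume (Ioo (a * α₁ + b * β₁) (a * α₂ + b * β₂)) := by
        rw [Real.volume_Ioo]; ring_nf
    _ ≤ volume C := measure_mono hsub
lemma lintegral_Ioi_comp_const_mul {F : ℝ → ℝ≥0∞} (hF : Measurable F) {k : ℝ} (hk : 0 < k) :
    ∫⁻ s in Ioi (0:ℝ), F (k * s) = ENNReal.ofReal k⁻¹ * ∫⁻ u in Ioi (0:ℝ), F u := by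
  have hmap : Measure.map (fun s : ℝ => k * s) (volume.restrict (Ioi (0:ℝ)))
      = ENNReal.ofReal k⁻¹ • volume.restrict (Ioi (0:ℝ)) := by
    have hpre : (fun s : ℝ => k * s) ⁻¹' (Ioi 0) = Ioi 0 := by
      ext x; simp [mul_pos_iff, hk, hk.not_gt, hk.le]
    rw [← hpre, ← Measure.restrict_map (measurable_const_mul k) measurableSet_Ioi,
      Real.map_volume_mul_left hk.ne', hpre,
      Measure.restrict_smul, abs_of_pos (inv_pos.mpr hk)]
  rw [← lintegral_map hF (measurable_const_mul k), hmap, lintegral_smul_measure, smul_eq_mul]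
lemma key_ineq {k : ℕ} {D : Set (Fin k → ℝ)}
    (ρ : ℝ → (Fin k → ℝ) → ℝ)
    (hconv : ConvexOn ℝ ((Set.univ : Set ℝ) ×ˢ D) (fun p => ρ p.1 p.2))
    (hnonneg : ∀ r θ, 0 ≤ ρ r θ)
    (hint : ∀ θ ∈ D, Integrable (fun r : ℝ => Real.exp (-ρ r θ)))
    {θ₀ θ₁ : Fin k → ℝ} (hθ₀ : θ₀ ∈ D) (hθ₁ : θ₁ ∈ D) {a b : ℝ}
    (ha : 0 < a) (hb : 0 < b) (hab : a + b = 1) (hθ₂ : a • θ₀ + b • θ₁ ∈ D) :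
    a * Real.log (∫ r : ℝ, Real.exp (-ρ r θ₀)) + b * Real.log (∫ r : ℝ, Real.exp (-ρ r θ₁))
      ≤ Real.log (∫ r : ℝ, Real.exp (-ρ r (a • θ₀ + b • θ₁))) := by
  set θ₂ := a • θ₀ + b • θ₁ with hθ₂def
  -- convexity and continuity in r
  have hconvr : ∀ θ ∈ D, ConvexOn ℝ (univ : Set ℝ) (fun r => ρ r θ) := by
    intro θ hθ
    refine ⟨convex_univ, fun x _ y _ p q hp hq hpq => ?_⟩
    have h2 := hconv.2 (x := (x, θ)) (y := (y, θ)) ⟨mem_univ _, hθ⟩ ⟨mem_univ _, hθ⟩ hp hq hpq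
    simpa [Prod.smul_mk, Prod.mk_add_mk, Convex.combo_self hpq, smul_eq_mul] using h2
  have hcontρ : ∀ θ ∈ D, Continuous (fun r => ρ r θ) := by
    intro θ hθ
    have := (hconvr θ hθ).continuousOn isOpen_univ
    rwa [continuousOn_univ] at this
  have hcontf : ∀ θ ∈ D, Continuous (fun r => Real.exp (-ρ r θ)) :=
    fun θ hθ => Real.continuous_exp.comp (hcontρ θ hθ).neg
  have hle1 : ∀ θ, ∀ r : ℝ, Real.exp (-ρ r θ) ≤ 1 := fun θ r =>
    Real.exp_le_one_iff.mpr (neg_nonpos.mpr (hnonneg r θ))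
  have hposf : ∀ θ, ∀ r : ℝ, 0 < Real.exp (-ρ r θ) := fun θ r => Real.exp_pos _
  -- positivity of the integrals
  have hIpos : ∀ θ ∈ D, 0 < ∫ r : ℝ, Real.exp (-ρ r θ) := by
    intro θ hθ
    rw [integral_pos_iff_support_of_nonneg (fun r => (hposf θ r).le) (hint θ hθ)]
    have : Function.support (fun r : ℝ => Real.exp (-ρ r θ)) = univ := by
      ext r; simp [(hposf θ r).ne']
    rw [this]
    simp [Real.volume_univ]
  -- sup of the densities
  set M : (Fin k → ℝ) → ℝ := fun θ => sSup (range fun r : ℝ => Real.exp (-ρ r θ)) with hM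
  have hMbdd : ∀ θ, BddAbove (range fun r : ℝ => Real.exp (-ρ r θ)) := by
    intro θ
    exact ⟨1, by rintro _ ⟨r, rfl⟩; exact hle1 θ r⟩
  have hMub : ∀ θ, ∀ r : ℝ, Real.exp (-ρ r θ) ≤ M θ :=
    fun θ r => le_csSup (hMbdd θ) (mem_range_self r)
  have hMpos : ∀ θ, 0 < M θ := fun θ => lt_of_lt_of_le (hposf θ 0) (hMub θ 0)
  -- layer cake
  have hmeas_lt : ∀ θ ∈ D, ∀ u : ℝ, MeasurableSet {r : ℝ | u < Real.exp (-ρ r θ)} :=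
    fun θ hθ u => measurableSet_lt measurable_const (hcontf θ hθ).measurable
  have layer : ∀ θ ∈ D, ∫⁻ r : ℝ, ENNReal.ofReal (Real.exp (-ρ r θ))
      = ∫⁻ s in Ioi (0:ℝ), volume {r : ℝ | s < Real.exp (-ρ r θ)} :=
    fun θ hθ => lintegral_eq_lintegral_meas_lt volume
      (Filter.Eventually.of_forall fun r => (hposf θ r).le) (hcontf θ hθ).measurable.aemeasurable
  have hfin : ∀ θ ∈ D, ∫⁻ r : ℝ, ENNReal.ofReal (Real.exp (-ρ r θ)) ≠ ⊤ :=
    fun θ hθ => (hint θ hθ).lintegral_lt_top.ne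
  have hIeq : ∀ θ ∈ D, ∫ r : ℝ, Real.exp (-ρ r θ)
      = (∫⁻ r : ℝ, ENNReal.ofReal (Real.exp (-ρ r θ))).toReal :=
    fun θ hθ => integral_eq_lintegral_of_nonneg_ae
      (Filter.Eventually.of_forall fun r => (hposf θ r).le) (hcontf θ hθ).aestronglyMeasurable
  -- the constant c
  set c := M θ₀ ^ a * M θ₁ ^ b with hc
  have hcpos : 0 < c := mul_pos (Real.rpow_pos_of_pos (hMpos θ₀) a)
    (Real.rpow_pos_of_pos (hMpos θ₁) b)
  -- level sets are convex, nonempty for levels below the sup, finite measure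
  have hlevel_conv : ∀ θ ∈ D, ∀ u : ℝ, 0 < u →
      Convex ℝ {r : ℝ | u < Real.exp (-ρ r θ)} := by
    intro θ hθ u hu
    have heq : {r : ℝ | u < Real.exp (-ρ r θ)}
        = {x ∈ (univ : Set ℝ) | (fun r => ρ r θ) x < -Real.log u} := by
      ext r
      simp only [mem_setOf_eq, mem_sep_iff, mem_univ, true_and]
      rw [← Real.log_lt_iff_lt_exp hu]
      constructor <;> intro h <;> linarith
    rw [heq]
    exact (hconvr θ hθ).convex_lt _
  have hlevel_ne : ∀ θ ∈ D, ∀ u : ℝ, u < M θ → {r : ℝ | u < Real.exp (-ρ r θ)}.Nonempty := by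
    intro θ hθ u hu
    obtain ⟨_, ⟨r, rfl⟩, hr⟩ := exists_lt_of_lt_csSup (range_nonempty _) hu
    exact ⟨r, hr⟩
  have hlevel_fin : ∀ θ ∈ D, ∀ u : ℝ, 0 < u →
      volume {r : ℝ | u < Real.exp (-ρ r θ)} ≠ ⊤ :=
    fun θ hθ u hu => ((hint θ hθ).measure_gt_lt_top hu).ne
  -- pointwise comparison of the measures of superlevel sets
  have hpoint : ∀ s : ℝ, 0 < s →
      ENNReal.ofReal a * volume {r : ℝ | (M θ₀ / c) * s < Real.exp (-ρ r θ₀)}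
        + ENNReal.ofReal b * volume {r : ℝ | (M θ₁ / c) * s < Real.exp (-ρ r θ₁)}
      ≤ volume {r : ℝ | s < Real.exp (-ρ r θ₂)} := by
    intro s hs
    rcases le_or_gt c s with hcs | hsc
    · have e0 : {r : ℝ | (M θ₀ / c) * s < Real.exp (-ρ r θ₀)} = ∅ := by
        ext r
        simp only [mem_setOf_eq, mem_empty_iff_false, iff_false, not_lt]
        calc Real.exp (-ρ r θ₀) ≤ M θ₀ := hMub θ₀ r
          _ = (M θ₀ / c) * c := by field_simp
          _ ≤ (M θ₀ / c) * s :=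
            mul_le_mul_of_nonneg_left hcs (div_nonneg (hMpos θ₀).le hcpos.le)
      have e1 : {r : ℝ | (M θ₁ / c) * s < Real.exp (-ρ r θ₁)} = ∅ := by
        ext r
        simp only [mem_setOf_eq, mem_empty_iff_false, iff_false, not_lt]
        calc Real.exp (-ρ r θ₁) ≤ M θ₁ := hMub θ₁ r
          _ = (M θ₁ / c) * c := by field_simp
          _ ≤ (M θ₁ / c) * s :=
            mul_le_mul_of_nonneg_left hcs (div_nonneg (hMpos θ₁).le hcpos.le)
      rw [e0, e1]
      simp
    · set t := s / c with ht
      have ht0 : 0 < t := div_pos hs hcpos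
      have ht1 : t < 1 := (div_lt_one hcpos).mpr hsc
      have harg0 : (M θ₀ / c) * s = M θ₀ * t := by rw [ht]; ring
      have harg1 : (M θ₁ / c) * s = M θ₁ * t := by rw [ht]; ring
      rw [harg0, harg1]
      have hu0 : 0 < M θ₀ * t := mul_pos (hMpos θ₀) ht0
      have hu1 : 0 < M θ₁ * t := mul_pos (hMpos θ₁) ht0
      apply convex_measure_superadd ha.le hb.le
        (hlevel_conv θ₀ hθ₀ _ hu0) (hlevel_conv θ₁ hθ₁ _ hu1)
        (hlevel_ne θ₀ hθ₀ _ (by nlinarith [hMpos θ₀]))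
        (hlevel_ne θ₁ hθ₁ _ (by nlinarith [hMpos θ₁]))
        (hlevel_fin θ₀ hθ₀ _ hu0) (hlevel_fin θ₁ hθ₁ _ hu1)
      intro x hx y hy
      simp only [mem_setOf_eq] at hx hy ⊢
      have hρ : ρ (a * x + b * y) θ₂ ≤ a * ρ x θ₀ + b * ρ y θ₁ := by
        have h2 := hconv.2 (x := (x, θ₀)) (y := (y, θ₁)) ⟨mem_univ _, hθ₀⟩
          ⟨mem_univ _, hθ₁⟩ ha.le hb.le hab
        simpa [Prod.smul_mk, Prod.mk_add_mk, smul_eq_mul] using h2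
      have hexp : Real.exp (-(a * ρ x θ₀ + b * ρ y θ₁))
          = Real.exp (-ρ x θ₀) ^ a * Real.exp (-ρ y θ₁) ^ b := by
        rw [← Real.exp_mul, ← Real.exp_mul, ← Real.exp_add]
        ring_nf
      have key1 : (M θ₀ * t) ^ a < Real.exp (-ρ x θ₀) ^ a :=
        Real.rpow_lt_rpow hu0.le hx ha
      have key2 : (M θ₁ * t) ^ b < Real.exp (-ρ y θ₁) ^ b :=
        Real.rpow_lt_rpow hu1.le hy hb
      have hseq : s = (M θ₀ * t) ^ a * (M θ₁ * t) ^ b := by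
        rw [Real.mul_rpow (hMpos θ₀).le ht0.le, Real.mul_rpow (hMpos θ₁).le ht0.le]
        have htab : t ^ a * t ^ b = t := by rw [← Real.rpow_add ht0, hab, Real.rpow_one]
        have hre : M θ₀ ^ a * t ^ a * (M θ₁ ^ b * t ^ b)
            = M θ₀ ^ a * M θ₁ ^ b * (t ^ a * t ^ b) := by ring
        rw [hre, htab, ← hc, ht, mul_div_cancel₀ _ hcpos.ne']
      rw [hseq]
      calc (M θ₀ * t) ^ a * (M θ₁ * t) ^ b
          < Real.exp (-ρ x θ₀) ^ a * Real.exp (-ρ y θ₁) ^ b :=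
            mul_lt_mul'' key1 key2 (Real.rpow_nonneg hu0.le a) (Real.rpow_nonneg hu1.le b)
        _ = Real.exp (-(a * ρ x θ₀ + b * ρ y θ₁)) := hexp.symm
        _ ≤ Real.exp (-ρ (a * x + b * y) θ₂) := Real.exp_le_exp.mpr (by linarith)
  -- integrate the pointwise inequality
  have hmeasF : ∀ θ ∈ D, Measurable fun u : ℝ => volume {r : ℝ | u < Real.exp (-ρ r θ)} :=
    fun θ hθ => Antitone.measurable fun u v huv =>
      measure_mono fun r hr => lt_of_le_of_lt huv hr
  have hchain : ENNReal.ofReal a * (ENNReal.ofReal (M θ₀ / c)⁻¹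
        * ∫⁻ u in Ioi (0:ℝ), volume {r : ℝ | u < Real.exp (-ρ r θ₀)})
      + ENNReal.ofReal b * (ENNReal.ofReal (M θ₁ / c)⁻¹
        * ∫⁻ u in Ioi (0:ℝ), volume {r : ℝ | u < Real.exp (-ρ r θ₁)})
      ≤ ∫⁻ s in Ioi (0:ℝ), volume {r : ℝ | s < Real.exp (-ρ r θ₂)} := by
    rw [← lintegral_Ioi_comp_const_mul (hmeasF θ₀ hθ₀) (div_pos (hMpos θ₀) hcpos),
      ← lintegral_Ioi_comp_const_mul (hmeasF θ₁ hθ₁) (div_pos (hMpos θ₁) hcpos),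
      ← lintegral_const_mul' (ENNReal.ofReal a) _ ENNReal.ofReal_ne_top,
      ← lintegral_const_mul' (ENNReal.ofReal b) _ ENNReal.ofReal_ne_top,
      ← lintegral_add_left' (((show Measurable fun s : ℝ =>
          volume {r : ℝ | M θ₀ / c * s < Real.exp (-ρ r θ₀)} from
          (hmeasF θ₀ hθ₀).comp (measurable_const_mul _)).const_mul
          (ENNReal.ofReal a)).aemeasurable)]
    exact setLIntegral_mono (hmeasF θ₂ hθ₂) fun s hs => hpoint s hs
  -- translate to real integrals
  have hne0 : ENNReal.ofReal a * (ENNReal.ofReal (c / M θ₀)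
      * ∫⁻ r : ℝ, ENNReal.ofReal (Real.exp (-ρ r θ₀))) ≠ ⊤ :=
    ENNReal.mul_ne_top ENNReal.ofReal_ne_top
      (ENNReal.mul_ne_top ENNReal.ofReal_ne_top (hfin θ₀ hθ₀))
  have hne1 : ENNReal.ofReal b * (ENNReal.ofReal (c / M θ₁)
      * ∫⁻ r : ℝ, ENNReal.ofReal (Real.exp (-ρ r θ₁))) ≠ ⊤ :=
    ENNReal.mul_ne_top ENNReal.ofReal_ne_top
      (ENNReal.mul_ne_top ENNReal.ofReal_ne_top (hfin θ₁ hθ₁))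
  have hmain : ENNReal.ofReal a * (ENNReal.ofReal (c / M θ₀)
        * ∫⁻ r : ℝ, ENNReal.ofReal (Real.exp (-ρ r θ₀)))
      + ENNReal.ofReal b * (ENNReal.ofReal (c / M θ₁)
        * ∫⁻ r : ℝ, ENNReal.ofReal (Real.exp (-ρ r θ₁)))
      ≤ ∫⁻ r : ℝ, ENNReal.ofReal (Real.exp (-ρ r θ₂)) := by
    rw [layer θ₀ hθ₀, layer θ₁ hθ₁, layer θ₂ hθ₂, ← inv_div (M θ₀) c, ← inv_div (M θ₁) c]
    exact hchain
  have hreal : a * (c / M θ₀ * ∫ r : ℝ, Real.exp (-ρ r θ₀))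
      + b * (c / M θ₁ * ∫ r : ℝ, Real.exp (-ρ r θ₁)) ≤ ∫ r : ℝ, Real.exp (-ρ r θ₂) := by
    rw [hIeq θ₀ hθ₀, hIeq θ₁ hθ₁, hIeq θ₂ hθ₂]
    have := ENNReal.toReal_mono (hfin θ₂ hθ₂) hmain
    rwa [ENNReal.toReal_add hne0 hne1, ENNReal.toReal_mul, ENNReal.toReal_mul,
      ENNReal.toReal_mul, ENNReal.toReal_mul, ENNReal.toReal_ofReal ha.le,
      ENNReal.toReal_ofReal hb.le,
      ENNReal.toReal_ofReal (div_nonneg hcpos.le (hMpos θ₀).le),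
      ENNReal.toReal_ofReal (div_nonneg hcpos.le (hMpos θ₁).le)] at this
  -- weighted AM-GM and take logarithms
  have hX : 0 < c / M θ₀ * ∫ r : ℝ, Real.exp (-ρ r θ₀) :=
    mul_pos (div_pos hcpos (hMpos θ₀)) (hIpos θ₀ hθ₀)
  have hY : 0 < c / M θ₁ * ∫ r : ℝ, Real.exp (-ρ r θ₁) :=
    mul_pos (div_pos hcpos (hMpos θ₁)) (hIpos θ₁ hθ₁)
  have hgm := Real.geom_mean_le_arith_mean2_weighted ha.le hb.le hX.le hY.le hab
  have hprod : (c / M θ₀ * ∫ r : ℝ, Real.exp (-ρ r θ₀)) ^ a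
      * (c / M θ₁ * ∫ r : ℝ, Real.exp (-ρ r θ₁)) ^ b
      = (∫ r : ℝ, Real.exp (-ρ r θ₀)) ^ a * (∫ r : ℝ, Real.exp (-ρ r θ₁)) ^ b := by
    rw [Real.mul_rpow (div_nonneg hcpos.le (hMpos θ₀).le) (hIpos θ₀ hθ₀).le,
      Real.mul_rpow (div_nonneg hcpos.le (hMpos θ₁).le) (hIpos θ₁ hθ₁).le,
      Real.div_rpow hcpos.le (hMpos θ₀).le, Real.div_rpow hcpos.le (hMpos θ₁).le]
    have hcab : c ^ a * c ^ b = c := by rw [← Real.rpow_add hcpos, hab, Real.rpow_one]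
    have hre : c ^ a / M θ₀ ^ a * (∫ r : ℝ, Real.exp (-ρ r θ₀)) ^ a
        * (c ^ b / M θ₁ ^ b * (∫ r : ℝ, Real.exp (-ρ r θ₁)) ^ b)
        = (c ^ a * c ^ b) / (M θ₀ ^ a * M θ₁ ^ b)
          * ((∫ r : ℝ, Real.exp (-ρ r θ₀)) ^ a * (∫ r : ℝ, Real.exp (-ρ r θ₁)) ^ b) := by
      ring
    rw [hre, hcab, ← hc, div_self hcpos.ne', one_mul]
  have hfinal : (∫ r : ℝ, Real.exp (-ρ r θ₀)) ^ a * (∫ r : ℝ, Real.exp (-ρ r θ₁)) ^ b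
      ≤ ∫ r : ℝ, Real.exp (-ρ r θ₂) := by
    calc (∫ r : ℝ, Real.exp (-ρ r θ₀)) ^ a * (∫ r : ℝ, Real.exp (-ρ r θ₁)) ^ b
        = (c / M θ₀ * ∫ r : ℝ, Real.exp (-ρ r θ₀)) ^ a
          * (c / M θ₁ * ∫ r : ℝ, Real.exp (-ρ r θ₁)) ^ b := hprod.symm
      _ ≤ a * (c / M θ₀ * ∫ r : ℝ, Real.exp (-ρ r θ₀))
          + b * (c / M θ₁ * ∫ r : ℝ, Real.exp (-ρ r θ₁)) := hgm
      _ ≤ ∫ r : ℝ, Real.exp (-ρ r θ₂) := hreal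
  have hP0 : 0 < (∫ r : ℝ, Real.exp (-ρ r θ₀)) ^ a := Real.rpow_pos_of_pos (hIpos θ₀ hθ₀) a
  have hP1 : 0 < (∫ r : ℝ, Real.exp (-ρ r θ₁)) ^ b := Real.rpow_pos_of_pos (hIpos θ₁ hθ₁) b
  have hlog := Real.log_le_log (mul_pos hP0 hP1) hfinal
  rwa [Real.log_mul hP0.ne' hP1.ne', Real.log_rpow (hIpos θ₀ hθ₀),
    Real.log_rpow (hIpos θ₁ hθ₁)] at hlog


theorem log_nc_concave_of_jointly_convex {k : ℕ} (D : Set (Fin k → ℝ)) (hD : Convex ℝ D)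
    (ρ : ℝ → (Fin k → ℝ) → ℝ)
    (hconv : ConvexOn ℝ ((Set.univ : Set ℝ) ×ˢ D) (fun p => ρ p.1 p.2))
    (hnonneg : ∀ r θ, 0 ≤ ρ r θ)
    (hint : ∀ θ ∈ D, Integrable (fun r : ℝ => Real.exp (-ρ r θ))) :
    ConcaveOn ℝ D (fun θ => Real.log (∫ r : ℝ, Real.exp (-ρ r θ))) := by
  refine ⟨hD, fun θ₀ hθ₀ θ₁ hθ₁ a b ha hb hab => ?_⟩
  rcases eq_or_lt_of_le ha with h | h
  · have hb1 : b = 1 := by linarith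
    simp [← h, hb1]
  rcases eq_or_lt_of_le hb with h' | h'
  · have ha1 : a = 1 := by linarith
    simp [← h', ha1]
  have hmem : a • θ₀ + b • θ₁ ∈ D := hD hθ₀ hθ₁ ha hb hab
  have := key_ineq ρ hconv hnonneg hint hθ₀ hθ₁ h h' hab hmem
  simpa [smul_eq_mul] using this
end

section
/- The quantile Huber penalty ρ(r) defined as -τκr - (τκ)²/2 for r < -τκ, r²/2 for -τκ ≤ r ≤ (1-τ)κ, and (1-τ)κr - ((1-τ)κ)²/2 for r > (1-τ)κ, equals sup over u ∈ [-κτ, κ(1-τ)] of (ur - u²/2). -/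
theorem quantile_huber_conjugate_rep (τ κ : ℝ) (hτ0 : 0 < τ) (hτ1 : τ < 1) (hκ : 0 < κ)
    (r : ℝ) :
    (if r < -(τ * κ) then -(τ * κ) * r - (τ * κ) ^ 2 / 2
     else if r ≤ (1 - τ) * κ then r ^ 2 / 2
     else (1 - τ) * κ * r - ((1 - τ) * κ) ^ 2 / 2) =
      ⨆ u : Set.Icc (-(κ * τ)) (κ * (1 - τ)), ((u : ℝ) * r - (u : ℝ) ^ 2 / 2) := by
  set L := (if r < -(τ * κ) then -(τ * κ) * r - (τ * κ) ^ 2 / 2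
     else if r ≤ (1 - τ) * κ then r ^ 2 / 2
     else (1 - τ) * κ * r - ((1 - τ) * κ) ^ 2 / 2) with hL
  have key : ∀ u : Set.Icc (-(κ * τ)) (κ * (1 - τ)), (u : ℝ) * r - (u : ℝ) ^ 2 / 2 ≤ L := by
    rintro ⟨u, hu1, hu2⟩
    simp only [hL]
    split_ifs with h1 h2
    · nlinarith [mul_nonneg (by linarith : (0:ℝ) ≤ u + κ * τ) (by linarith : (0:ℝ) ≤ -(τ * κ) - r)]
    · nlinarith [sq_nonneg (r - u)]
    · nlinarith [mul_nonneg (by linarith : (0:ℝ) ≤ κ * (1 - τ) - u) (by linarith : (0:ℝ) ≤ r - (1 - τ) * κ)]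
  have hbdd : BddAbove (Set.range fun u : Set.Icc (-(κ * τ)) (κ * (1 - τ)) =>
      (u : ℝ) * r - (u : ℝ) ^ 2 / 2) := ⟨L, by rintro x ⟨u, rfl⟩; exact key u⟩
  haveI : Nonempty ↑(Set.Icc (-(κ * τ)) (κ * (1 - τ))) :=
    ⟨⟨-(κ * τ), Set.left_mem_Icc.mpr (by nlinarith)⟩⟩
  apply le_antisymm
  · by_cases h1 : r < -(τ * κ)
    · have hmem : -(κ * τ) ∈ Set.Icc (-(κ * τ)) (κ * (1 - τ)) := by
        constructor <;> nlinarith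
      have := le_ciSup hbdd ⟨-(κ * τ), hmem⟩
      simp only [hL, if_pos h1]
      calc -(τ * κ) * r - (τ * κ) ^ 2 / 2 = -(κ * τ) * r - (-(κ * τ)) ^ 2 / 2 := by ring
        _ ≤ _ := this
    · by_cases h2 : r ≤ (1 - τ) * κ
      · have hmem : r ∈ Set.Icc (-(κ * τ)) (κ * (1 - τ)) := by
          constructor <;> nlinarith [not_lt.mp h1]
        have := le_ciSup hbdd ⟨r, hmem⟩
        simp only [hL, if_neg h1, if_pos h2]
        calc r ^ 2 / 2 = r * r - r ^ 2 / 2 := by ring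
          _ ≤ _ := this
      · have hmem : κ * (1 - τ) ∈ Set.Icc (-(κ * τ)) (κ * (1 - τ)) := by
          constructor <;> nlinarith
        have := le_ciSup hbdd ⟨κ * (1 - τ), hmem⟩
        simp only [hL, if_neg h1, if_neg h2]
        calc (1 - τ) * κ * r - ((1 - τ) * κ) ^ 2 / 2
            = κ * (1 - τ) * r - (κ * (1 - τ)) ^ 2 / 2 := by ring
          _ ≤ _ := this
  · exact ciSup_le key
end
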